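/- Let a₀ ∈ (0,1) be the minimal root of 4a(2−a)(1−a)²(a²−2a+2)² = 1. Let a ∈ [a₀, 1), let c, d > 0 with 0 < c/d ≤ ((a−1)² + 1)/(2(a−1)² + 1), and let δ₂ = (√(c/d) − 1)(1−a). If δ₂ < δ < 0, then the functions F(a−1−δ, 1−a+δ; 1; 1−x^d) and F(a−1, 1−a; 1; 1−x^c) of x are not comparable on (0,1): there exist x, y ∈ (0,1) such that F(a−1, 1−a; 1; 1−x^c) < F(a−1−δ, 1−a+δ; 1; 1−x^d) and F(a−1, 1−a; 1; 1−y^c) > F(a−1−δ, 1−a+δ; 1; 1−y^d). -/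

import Mathlib

open Real Set Filter Topology

/-- The Gaussian hypergeometric function `F(a,b;c;x)`, defined as a power series
with Pochhammer (shifted factorial) coefficients. -/
noncomputable def hyp (a b c x : ℝ) : ℝ :=
  ∑' n : ℕ, ((∏ i ∈ Finset.range n, (a + i)) * (∏ i ∈ Finset.range n, (b + i)) /
    ((∏ i ∈ Finset.range n, (c + i)) * (Nat.factorial n))) * x ^ n

namespace Stmt15Aux

noncomputable def Q (u : ℝ) (n : ℕ) : ℝ := ∏ j ∈ Finset.range n, (1 - u ^ 2 / ((j : ℝ) + 1) ^ 2)

lemma Q_zero (u : ℝ) : Q u 0 = 1 := by simp [Q]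

lemma Q_succ (u : ℝ) (n : ℕ) : Q u (n + 1) = Q u n * (1 - u ^ 2 / ((n : ℝ) + 1) ^ 2) :=
  Finset.prod_range_succ _ _

lemma Q_one (u : ℝ) : Q u 1 = 1 - u ^ 2 := by simp [Q]

lemma factor_pos {u : ℝ} (hu0 : 0 < u) (hu1 : u < 1) (j : ℕ) :
    0 < 1 - u ^ 2 / ((j : ℝ) + 1) ^ 2 := by
  have h1 : (1:ℝ) ≤ ((j : ℝ) + 1) ^ 2 := by nlinarith [Nat.cast_nonneg (α := ℝ) j]
  have h2 : u ^ 2 < 1 := by nlinarith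
  have h3 : u ^ 2 / ((j : ℝ) + 1) ^ 2 ≤ u ^ 2 := div_le_self (by positivity) h1
  linarith

lemma Q_pos {u : ℝ} (hu0 : 0 < u) (hu1 : u < 1) (n : ℕ) : 0 < Q u n :=
  Finset.prod_pos fun j _ => factor_pos hu0 hu1 j

lemma Q_succ_le {u : ℝ} (hu0 : 0 < u) (hu1 : u < 1) (n : ℕ) : Q u (n + 1) ≤ Q u n := by
  rw [Q_succ]
  have hq := Q_pos hu0 hu1 n
  have h0 : 0 ≤ u ^ 2 / ((n : ℝ) + 1) ^ 2 := by positivity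
  nlinarith

noncomputable def L (u : ℝ) : ℝ := Real.sin (π * u) / (π * u)

lemma Q_tendsto {u : ℝ} (hu0 : 0 < u) : Tendsto (Q u) atTop (𝓝 (L u)) := by
  have hpu : π * u ≠ 0 := by positivity
  have h := (Real.tendsto_euler_sin_prod u).div_const (π * u)
  refine h.congr fun n => ?_
  rw [mul_comm, mul_div_assoc, div_self hpu, mul_one]
  rfl

lemma L_pos {u : ℝ} (hu0 : 0 < u) (hu1 : u < 1) : 0 < L u := by
  have h1 : 0 < Real.sin (π * u) :=
    Real.sin_pos_of_pos_of_lt_pi (by positivity) (by nlinarith [Real.pi_pos])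
  have h2 : 0 < π * u := by positivity
  unfold L; positivity

lemma L_lt {u v : ℝ} (hv0 : 0 < v) (hvu : v < u) (hu1 : u < 1) : L u < L v := by
  have hu0 : 0 < u := hv0.trans hvu
  have hv1 : v < 1 := hvu.trans hu1
  set r : ℝ := (1 - v ^ 2) / (1 - u ^ 2) with hr
  have hu2 : 0 < 1 - u ^ 2 := by nlinarith
  have hv2 : 0 < 1 - v ^ 2 := by nlinarith
  have hr1 : 1 < r := by
    rw [hr, lt_div_iff₀ hu2]
    nlinarith
  have hQ : ∀ n, r * Q u (n + 1) ≤ Q v (n + 1) := by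
    intro n
    induction n with
    | zero =>
      rw [Q_one, Q_one, hr]
      rw [div_mul_cancel₀ _ hu2.ne']
    | succ m ih =>
      rw [Q_succ u (m + 1), Q_succ v (m + 1)]
      have hfv := factor_pos hv0 hv1 (m + 1)
      have hfu := factor_pos hu0 hu1 (m + 1)
      have hqv := Q_pos hv0 hv1 (m + 1)
      have hqu := Q_pos hu0 hu1 (m + 1)
      have hfle : 1 - u ^ 2 / ((m + 1 : ℕ) + 1 : ℝ) ^ 2 ≤ 1 - v ^ 2 / ((m + 1 : ℕ) + 1 : ℝ) ^ 2 := by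
        have hp : (0:ℝ) < ((m + 1 : ℕ) + 1 : ℝ) ^ 2 := by positivity
        have hvv : v ^ 2 ≤ u ^ 2 := by nlinarith
        have h5 : v ^ 2 / ((m + 1 : ℕ) + 1 : ℝ) ^ 2 ≤ u ^ 2 / ((m + 1 : ℕ) + 1 : ℝ) ^ 2 :=
          by gcongr
        linarith
      calc r * (Q u (m + 1) * (1 - u ^ 2 / ((m + 1 : ℕ) + 1 : ℝ) ^ 2))
          = (r * Q u (m + 1)) * (1 - u ^ 2 / ((m + 1 : ℕ) + 1 : ℝ) ^ 2) := by ring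
        _ ≤ Q v (m + 1) * (1 - u ^ 2 / ((m + 1 : ℕ) + 1 : ℝ) ^ 2) := by
            apply mul_le_mul_of_nonneg_right ih hfu.le
        _ ≤ Q v (m + 1) * (1 - v ^ 2 / ((m + 1 : ℕ) + 1 : ℝ) ^ 2) := by
            apply mul_le_mul_of_nonneg_left hfle hqv.le
  have htu : Tendsto (fun n => r * Q u (n + 1)) atTop (𝓝 (r * L u)) :=
    ((Q_tendsto hu0).comp (tendsto_add_atTop_nat 1)).const_mul r
  have htv : Tendsto (fun n => Q v (n + 1)) atTop (𝓝 (L v)) :=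
    (Q_tendsto hv0).comp (tendsto_add_atTop_nat 1)
  have hle : r * L u ≤ L v := le_of_tendsto_of_tendsto' htu htv hQ
  have hLu := L_pos hu0 hu1
  nlinarith

/-- hypergeometric coefficients for parameters (−u, u, 1) -/
noncomputable def e (u : ℝ) : ℕ → ℝ
  | 0 => 1
  | (m + 1) => Q u (m + 1) - Q u m

lemma prod_one_add (n : ℕ) : (∏ i ∈ Finset.range n, ((1:ℝ) + (i:ℝ))) = (n.factorial : ℝ) := by
  induction n with
  | zero => simp
  | succ m ih =>
    rw [Finset.prod_range_succ, ih, Nat.factorial_succ]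
    push_cast
    ring

lemma e_step (u : ℝ) (n : ℕ) :
    e u (n + 1) * (((n + 1).factorial : ℝ)) ^ 2
      = e u n * ((n.factorial : ℝ)) ^ 2 * ((n : ℝ) ^ 2 - u ^ 2) := by
  cases n with
  | zero =>
    simp [e, Q_succ, Q_zero]
    try ring
  | succ m =>
    have hA : ((m : ℝ) + 1) ≠ 0 := by positivity
    have hB : ((m : ℝ) + 2) ≠ 0 := by positivity
    show (Q u (m+2) - Q u (m+1)) * _ = (Q u (m+1) - Q u m) * _ * _
    rw [Q_succ u (m+1), Q_succ u m, Nat.factorial_succ (m+1), Nat.factorial_succ m]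
    push_cast
    field_simp
    ring

lemma key_prod (u : ℝ) (n : ℕ) :
    (∏ i ∈ Finset.range n, (-u + (i:ℝ))) * (∏ i ∈ Finset.range n, (u + (i:ℝ)))
      = e u n * ((n.factorial : ℝ)) ^ 2 := by
  induction n with
  | zero => simp [e]
  | succ m ih =>
    rw [Finset.prod_range_succ, Finset.prod_range_succ]
    have h : (∏ i ∈ Finset.range m, (-u + (i:ℝ))) * (-u + m) *
        ((∏ i ∈ Finset.range m, (u + (i:ℝ))) * (u + m))
        = ((∏ i ∈ Finset.range m, (-u + (i:ℝ))) * (∏ i ∈ Finset.range m, (u + (i:ℝ)))) *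
          ((m:ℝ)^2 - u^2) := by ring
    rw [h, ih, e_step u m]
    try ring

lemma hyp_eq (u z : ℝ) : hyp (-u) u 1 z = ∑' n, e u n * z ^ n := by
  unfold hyp
  refine tsum_congr fun n => ?_
  have hf : ((n.factorial : ℝ)) ≠ 0 := Nat.cast_ne_zero.mpr n.factorial_ne_zero
  rw [prod_one_add, key_prod]
  field_simp

noncomputable def g (u : ℝ) : ℕ → ℝ
  | 0 => 0
  | (m + 1) => Q u m - Q u (m + 1)

lemma g_nonneg {u : ℝ} (hu0 : 0 < u) (hu1 : u < 1) (n : ℕ) : 0 ≤ g u n := by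
  cases n with
  | zero => simp [g]
  | succ m => simpa [g] using Q_succ_le hu0 hu1 m

lemma hasSum_d {u : ℝ} (hu0 : 0 < u) (hu1 : u < 1) :
    HasSum (fun n => Q u n - Q u (n + 1)) (1 - L u) := by
  rw [hasSum_iff_tendsto_nat_of_nonneg (fun n => by linarith [Q_succ_le hu0 hu1 n]) _]
  have h := (tendsto_const_nhds (x := (1:ℝ))).sub (Q_tendsto hu0)
  refine h.congr fun n => ?_
  rw [Finset.sum_range_sub' (Q u) n, Q_zero]

lemma hasSum_g {u : ℝ} (hu0 : 0 < u) (hu1 : u < 1) : HasSum (g u) (1 - L u) := by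
  have h : HasSum (fun n => g u (n + 1)) (1 - L u) := hasSum_d hu0 hu1
  have := (hasSum_nat_add_iff (f := g u) 1).mp h
  simpa [g] using this

noncomputable def T (u z : ℝ) : ℝ := ∑' n, g u n * z ^ n

lemma summable_gz {u z : ℝ} (hu0 : 0 < u) (hu1 : u < 1) (hz0 : 0 ≤ z) (hz1 : z ≤ 1) :
    Summable (fun n => g u n * z ^ n) := by
  refine Summable.of_nonneg_of_le
    (fun n => mul_nonneg (g_nonneg hu0 hu1 n) (pow_nonneg hz0 n)) (fun n => ?_)
    (hasSum_g hu0 hu1).summable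
  have h1 : z ^ n ≤ 1 := pow_le_one₀ hz0 hz1
  nlinarith [g_nonneg hu0 hu1 n, pow_nonneg hz0 n]

lemma summable_dz {u z : ℝ} (hu0 : 0 < u) (hu1 : u < 1) (hz0 : 0 ≤ z) (hz1 : z ≤ 1) :
    Summable (fun n => (Q u n - Q u (n + 1)) * z ^ (n + 1)) := by
  have := (summable_nat_add_iff (f := fun n => g u n * z ^ n) 1).mpr
    (summable_gz hu0 hu1 hz0 hz1)
  exact this.congr fun n => by simp [g]

lemma T_eq {u z : ℝ} (hu0 : 0 < u) (hu1 : u < 1) (hz0 : 0 ≤ z) (hz1 : z ≤ 1) :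
    T u z = ∑' n, (Q u n - Q u (n + 1)) * z ^ (n + 1) := by
  rw [T, Summable.tsum_eq_zero_add (summable_gz hu0 hu1 hz0 hz1)]
  simp [g]

lemma T_ge {u z : ℝ} (hu0 : 0 < u) (hu1 : u < 1) (hz0 : 0 ≤ z) (hz1 : z ≤ 1) :
    u ^ 2 * z ≤ T u z := by
  rw [T_eq hu0 hu1 hz0 hz1]
  have h0 : (Q u 0 - Q u 1) * z ^ 1 = u ^ 2 * z := by rw [Q_zero, Q_one]; ring
  rw [← h0]
  exact Summable.le_tsum (summable_dz hu0 hu1 hz0 hz1) 0 fun j _ =>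
    mul_nonneg (by linarith [Q_succ_le hu0 hu1 j]) (pow_nonneg hz0 _)

lemma T_le {u z : ℝ} (hu0 : 0 < u) (hu1 : u < 1) (hz0 : 0 ≤ z) (hz1 : z ≤ 1) :
    T u z ≤ u ^ 2 * z + z ^ 2 := by
  rw [T_eq hu0 hu1 hz0 hz1]
  have hs := summable_dz hu0 hu1 hz0 hz1
  rw [Summable.tsum_eq_zero_add hs]
  have h0 : (Q u 0 - Q u (0 + 1)) * z ^ (0 + 1) = u ^ 2 * z := by
    rw [Q_zero, show (0:ℕ)+1 = 1 from rfl, Q_one]; ring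
  rw [h0]
  have htail : ∑' n, (Q u (n + 1) - Q u (n + 1 + 1)) * z ^ (n + 1 + 1) ≤ z ^ 2 := by
    have hs1 : Summable (fun n => (Q u (n+1) - Q u (n + 2)) * z ^ (n + 2)) :=
      (summable_nat_add_iff (f := fun n => (Q u n - Q u (n+1)) * z ^ (n+1)) 1).mpr hs
    have hs2 : Summable (fun n => (Q u (n+1) - Q u (n + 2)) * z ^ 2) :=
      ((summable_nat_add_iff (f := fun n => Q u n - Q u (n+1)) 1).mpr
        (hasSum_d hu0 hu1).summable).mul_right _
    have hle : ∑' n, (Q u (n + 1) - Q u (n + 2)) * z ^ (n + 2)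
        ≤ ∑' n, (Q u (n + 1) - Q u (n + 2)) * z ^ 2 := by
      refine Summable.tsum_le_tsum (fun n => ?_) hs1 hs2
      have hq := Q_succ_le hu0 hu1 (n + 1)
      have hzp : z ^ (n + 2) ≤ z ^ 2 := pow_le_pow_of_le_one hz0 hz1 (by omega)
      nlinarith [pow_nonneg hz0 (n+2)]
    have hsum1 : ∑' n, (Q u (n + 1) - Q u (n + 2)) * z ^ 2
        = (∑' n, (Q u (n + 1) - Q u (n + 2))) * z ^ 2 := tsum_mul_right
    have hd := hasSum_d hu0 hu1
    have hdslice : ∑' n, (Q u (n + 1) - Q u (n + 2)) = (1 - L u) - u ^ 2 := by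
      have h1 := Summable.tsum_eq_zero_add hd.summable
      rw [hd.tsum_eq] at h1
      have h00 : Q u 0 - Q u (0+1) = u ^ 2 := by rw [Q_zero, Q_one]; ring
      rw [h00] at h1
      have h2 : ∑' n, (Q u (n + 1) - Q u (n + 1 + 1)) = 1 - L u - u ^ 2 := by linarith
      simpa using h2
    have hLu := L_pos hu0 hu1
    have h3 : (1 - L u - u ^ 2) * z ^ 2 ≤ 1 * z ^ 2 := by nlinarith [sq_nonneg z, sq_nonneg u]
    calc ∑' n, (Q u (n + 1) - Q u (n + 1 + 1)) * z ^ (n + 1 + 1)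
        ≤ ∑' n, (Q u (n + 1) - Q u (n + 2)) * z ^ 2 := hle
      _ = (1 - L u - u ^ 2) * z ^ 2 := by rw [hsum1, hdslice]
      _ ≤ z ^ 2 := by linarith [h3]
  linarith [htail]

lemma T_tendsto {u : ℝ} (hu0 : 0 < u) (hu1 : u < 1) :
    Tendsto (T u) (𝓝[<] (1:ℝ)) (𝓝 (1 - L u)) := by
  apply Real.tendsto_tsum_powerSeries_nhdsWithin_lt
  exact (hasSum_iff_tendsto_nat_of_nonneg (g_nonneg hu0 hu1) _).mp (hasSum_g hu0 hu1)

lemma hyp_eq_T {u z : ℝ} (hu0 : 0 < u) (hu1 : u < 1) (hz0 : 0 ≤ z) (hz1 : z ≤ 1) :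
    hyp (-u) u 1 z = 1 - T u z := by
  rw [hyp_eq]
  have hind : HasSum (fun n : ℕ => if n = 0 then (1:ℝ) else 0) 1 := hasSum_ite_eq 0 1
  have hfun : (fun n => e u n * z ^ n)
      = fun n => (if n = 0 then (1:ℝ) else 0) - g u n * z ^ n := by
    funext n
    cases n with
    | zero => simp [e, g]
    | succ m =>
      simp only [e, g, Nat.succ_ne_zero, if_false]
      ring
  rw [hfun, Summable.tsum_sub hind.summable (summable_gz hu0 hu1 hz0 hz1), hind.tsum_eq]
  rfl

/-- map facts for the substitution `z = 1 - x ^ p` -/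
lemma map_to_one {p : ℝ} (hp : 0 < p) :
    Tendsto (fun x : ℝ => 1 - x ^ p) (𝓝[>] (0:ℝ)) (𝓝[<] (1:ℝ)) := by
  rw [tendsto_nhdsWithin_iff]
  constructor
  · have h1 : ContinuousAt (fun x : ℝ => x ^ p) 0 :=
      Real.continuousAt_rpow_const 0 p (Or.inr hp.le)
    have h2 : Tendsto (fun x : ℝ => x ^ p) (𝓝[>] (0:ℝ)) (𝓝 0) := by
      have := h1.tendsto.mono_left (nhdsWithin_le_nhds (s := Ioi (0:ℝ)))
      rwa [Real.zero_rpow hp.ne'] at this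
    have := (tendsto_const_nhds (x := (1:ℝ))).sub h2
    simpa using this
  · filter_upwards [eventually_mem_nhdsWithin] with x hx
    have : 0 < x ^ p := Real.rpow_pos_of_pos hx p
    simp only [mem_Iio]
    linarith

end Stmt15Aux

open Stmt15Aux

theorem stmt15 (a₀ a c d δ : ℝ)
    (ha₀ : a₀ ∈ Ioo (0:ℝ) 1)
    (hroot : 4 * a₀ * (2 - a₀) * (1 - a₀) ^ 2 * (a₀ ^ 2 - 2 * a₀ + 2) ^ 2 = 1)
    (hmin : ∀ x ∈ Ioo (0:ℝ) 1,
      4 * x * (2 - x) * (1 - x) ^ 2 * (x ^ 2 - 2 * x + 2) ^ 2 = 1 → a₀ ≤ x)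
    (ha : a ∈ Ico a₀ 1)
    (hc : 0 < c) (hd : 0 < d) (hcd : c / d ≤ ((a - 1) ^ 2 + 1) / (2 * (a - 1) ^ 2 + 1))
    (hδ : (Real.sqrt (c / d) - 1) * (1 - a) < δ) (hδ0 : δ < 0) :
    (∃ x ∈ Ioo (0:ℝ) 1,
      hyp (a - 1) (1 - a) 1 (1 - x ^ c) < hyp (a - 1 - δ) (1 - a + δ) 1 (1 - x ^ d)) ∧
    (∃ y ∈ Ioo (0:ℝ) 1,
      hyp (a - 1) (1 - a) 1 (1 - y ^ c) > hyp (a - 1 - δ) (1 - a + δ) 1 (1 - y ^ d)) := by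
  obtain ⟨ha₀0, ha₀1⟩ := ha₀
  obtain ⟨haa₀, ha1⟩ := ha
  have ha0 : 0 < a := lt_of_lt_of_le ha₀0 haa₀
  obtain ⟨u, hu_def⟩ : ∃ u : ℝ, u = 1 - a := ⟨_, rfl⟩
  obtain ⟨v, hv_def⟩ : ∃ v : ℝ, v = 1 - a + δ := ⟨_, rfl⟩
  have hu0 : 0 < u := by simp only [hu_def]; linarith
  have hu1 : u < 1 := by simp only [hu_def]; linarith
  have hcd0 : 0 < c / d := div_pos hc hd
  have hsq : 0 < Real.sqrt (c / d) := Real.sqrt_pos.mpr hcd0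
  have hvs : Real.sqrt (c / d) * u < v := by
    have h9 : (Real.sqrt (c / d) - 1) * u < δ := by rw [hu_def]; exact hδ
    simp only [hv_def, hu_def] at *
    nlinarith
  have hv0 : 0 < v := lt_trans (by positivity) hvs
  have hvu : v < u := by simp only [hv_def, hu_def]; linarith
  have hv1 : v < 1 := hvu.trans hu1
  have hv2d : u ^ 2 * c < v ^ 2 * d := by
    have h1 : (Real.sqrt (c / d)) ^ 2 = c / d := Real.sq_sqrt hcd0.le
    have h2 : (Real.sqrt (c / d) * u) ^ 2 < v ^ 2 := by
      have hnn : 0 ≤ Real.sqrt (c / d) * u := by positivity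
      nlinarith
    have h3 : (c / d) * u ^ 2 < v ^ 2 := by nlinarith [h2, h1]
    have h4 : c * u ^ 2 < v ^ 2 * d := by
      rw [div_mul_eq_mul_div, div_lt_iff₀ hd] at h3
      linarith
    linarith
  -- rewrite hyps
  have e1 : a - 1 = -u := by simp only [hu_def]; ring
  have e2 : 1 - a = u := hu_def.symm
  have e3 : a - 1 - δ = -v := by simp only [hv_def]; ring
  have e4 : 1 - a + δ = v := hv_def.symm
  rw [e3, e4, e1, e2]
  have hzmem : ∀ (p : ℝ), 0 < p → ∀ x ∈ Ioo (0:ℝ) 1, 0 ≤ 1 - x ^ p ∧ 1 - x ^ p ≤ 1 := by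
    intro p hp x hx
    have h1 : 0 < x ^ p := Real.rpow_pos_of_pos hx.1 p
    have h2 : x ^ p < 1 := Real.rpow_lt_one hx.1.le hx.2 hp
    constructor <;> linarith
  constructor
  · -- near x = 0
    have h1 := (T_tendsto hu0 hu1).comp (map_to_one hc)
    have h2 := (T_tendsto hv0 hv1).comp (map_to_one hd)
    have hdiff := h1.sub h2
    have hL : 0 < (1 - L u) - (1 - L v) := by
      have := L_lt hv0 hvu hu1
      linarith
    have hev := hdiff.eventually (eventually_gt_nhds hL)
    have hio : Ioo (0:ℝ) 1 ∈ 𝓝[>] (0:ℝ) := Ioo_mem_nhdsGT_of_mem ⟨le_refl 0, one_pos⟩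
    obtain ⟨x, hx1, hx2⟩ := (hev.and hio).exists
    refine ⟨x, hx2, ?_⟩
    obtain ⟨hzc0, hzc1⟩ := hzmem c hc x hx2
    obtain ⟨hzd0, hzd1⟩ := hzmem d hd x hx2
    rw [hyp_eq_T hu0 hu1 hzc0 hzc1, hyp_eq_T hv0 hv1 hzd0 hzd1]
    simp only [Function.comp_apply] at hx1
    linarith [hx1]
  · -- near y = 1
    have hdc1 : HasDerivAt (fun x : ℝ => x ^ c) c 1 := by
      have := Real.hasDerivAt_rpow_const (x := (1:ℝ)) (p := c) (Or.inl one_ne_zero)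
      simpa [Real.one_rpow] using this
    have hdd1 : HasDerivAt (fun x : ℝ => x ^ d) d 1 := by
      have := Real.hasDerivAt_rpow_const (x := (1:ℝ)) (p := d) (Or.inl one_ne_zero)
      simpa [Real.one_rpow] using this
    have f1c : HasDerivAt (fun x : ℝ => 1 - x ^ c) (-c) 1 := by
      simpa using hdc1.const_sub 1
    have f1d : HasDerivAt (fun x : ℝ => 1 - x ^ d) (-d) 1 := by
      simpa using hdd1.const_sub 1
    have f2 : HasDerivAt (fun x : ℝ => (1 - x ^ c) ^ 2) 0 1 := by
      have := f1c.fun_pow 2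
      simpa [Real.one_rpow] using this
    have H : HasDerivAt
        (fun x : ℝ => v ^ 2 * (1 - x ^ d) - u ^ 2 * (1 - x ^ c) - (1 - x ^ c) ^ 2)
        (v ^ 2 * (-d) - u ^ 2 * (-c) - 0) 1 :=
      ((f1d.const_mul (v ^ 2)).sub (f1c.const_mul (u ^ 2))).sub f2
    have hD : v ^ 2 * (-d) - u ^ 2 * (-c) - 0 < 0 := by nlinarith
    have hslope := hasDerivAt_iff_tendsto_slope.mp H
    have hmono : 𝓝[<] (1:ℝ) ≤ 𝓝[≠] (1:ℝ) :=
      nhdsWithin_mono 1 fun y hy => ne_of_lt hy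
    have hev := (hslope.mono_left hmono).eventually (eventually_lt_nhds hD)
    have hio : Ioo (0:ℝ) 1 ∈ 𝓝[<] (1:ℝ) := Ioo_mem_nhdsLT_of_mem ⟨one_pos, le_refl 1⟩
    obtain ⟨y, hy1, hy2⟩ := (hev.and (eventually_mem_nhdsWithin.and
      (eventually_of_mem hio fun x hx => hx))).exists
    obtain ⟨hyIio, hyIoo⟩ := hy2
    refine ⟨y, hyIoo, ?_⟩
    obtain ⟨hzc0, hzc1⟩ := hzmem c hc y hyIoo
    obtain ⟨hzd0, hzd1⟩ := hzmem d hd y hyIoo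
    -- from slope < 0 and y < 1 deduce h y > 0
    have hy1' : y < 1 := hyIio
    have hh1 : (fun x : ℝ => v ^ 2 * (1 - x ^ d) - u ^ 2 * (1 - x ^ c) - (1 - x ^ c) ^ 2) 1
        = 0 := by simp [Real.one_rpow]
    rw [slope_def_field] at hy1
    have hypos : 0 < v ^ 2 * (1 - y ^ d) - u ^ 2 * (1 - y ^ c) - (1 - y ^ c) ^ 2 := by
      set F := v ^ 2 * (1 - y ^ d) - u ^ 2 * (1 - y ^ c) - (1 - y ^ c) ^ 2 with hF
      have : (F - 0) / (y - 1) < 0 := by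
        have hz2 : v ^ 2 * (1 - (1:ℝ) ^ d) - u ^ 2 * (1 - (1:ℝ) ^ c) - (1 - (1:ℝ) ^ c) ^ 2
            = 0 := by simp [Real.one_rpow]
        rw [hz2] at hy1
        exact hy1
      have hyn : y - 1 < 0 := by linarith
      rcases lt_trichotomy F 0 with h | h | h
      · exfalso
        have hpos : 0 < (F - 0) / (y - 1) := div_pos_of_neg_of_neg (by linarith) hyn
        linarith
      · exfalso
        rw [h] at this
        norm_num at this
      · exact h
    rw [hyp_eq_T hu0 hu1 hzc0 hzc1, hyp_eq_T hv0 hv1 hzd0 hzd1]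
    have hTu := T_le hu0 hu1 hzc0 hzc1
    have hTv := T_ge hv0 hv1 hzd0 hzd1
    have : T u (1 - y ^ c) < T v (1 - y ^ d) := by linarith
    simp only [gt_iff_lt]
    linarith
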